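/- For the symmetric Pareto distribution with shape 2 and any c > 0: ∫_{-∞}^{-c} f(z+c) F(z) F(z+c) dz ≤ F(-c)/4, ∫_0^∞ f(z+c) F(z) F(z+c) dz ≤ F(-c), where f(x) = 1/(|x|+1)^3 and F is its CDF; note F(-c) = 1/(2(c+1)^2). -/

import Mathlib

open Real MeasureTheory

/-- Density of the symmetric Pareto distribution with shape 2. -/
noncomputable def sParetoPdf (x : ℝ) : ℝ := 1 / (|x| + 1) ^ 3

/-- CDF of the symmetric Pareto distribution with shape 2. -/
noncomputable def sParetoCdf (x : ℝ) : ℝ :=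
  if x < 0 then 1 / (2 * (1 - x) ^ 2) else 1 - 1 / (2 * (x + 1) ^ 2)

open Set Filter Topology

lemma sParetoPdf_nonneg (x : ℝ) : 0 ≤ sParetoPdf x := by
  unfold sParetoPdf; positivity

lemma sParetoCdf_nonneg (x : ℝ) : 0 ≤ sParetoCdf x := by
  unfold sParetoCdf
  split_ifs with h
  · positivity
  · push_neg at h
    have h2 : (1:ℝ) ≤ (x + 1) ^ 2 := by nlinarith
    have h3 : 1 / (2 * (x + 1) ^ 2) ≤ 1 / 2 := by
      rw [div_le_div_iff₀ (by positivity) (by norm_num)]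
      nlinarith
    linarith

lemma sParetoCdf_le_one (x : ℝ) : sParetoCdf x ≤ 1 := by
  unfold sParetoCdf
  split_ifs with h
  · have h2 : (1:ℝ) ≤ (1 - x) ^ 2 := by nlinarith
    rw [div_le_one (by positivity)]
    linarith
  · have : 0 ≤ 1 / (2 * (x + 1) ^ 2) := by positivity
    linarith

lemma measurable_sParetoPdf : Measurable sParetoPdf := by
  unfold sParetoPdf
  measurability

lemma measurable_sParetoCdf : Measurable sParetoCdf := by
  unfold sParetoCdf
  apply Measurable.ite (measurableSet_lt measurable_id measurable_const) <;> fun_prop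

lemma integ5 (a d : ℝ) (h : 0 < a + d) :
    IntegrableOn (fun x => ((x + d) ^ 5)⁻¹) (Ioi a) ∧
    ∫ x in Ioi a, ((x + d) ^ 5)⁻¹ = (4 * (a + d) ^ 4)⁻¹ := by
  have hderiv : ∀ x ∈ Ici a, HasDerivAt (fun x : ℝ => -(4 * (x + d) ^ 4)⁻¹)
      (((x + d) ^ 5)⁻¹) x := by
    intro x hx
    have hxd : 0 < x + d := lt_of_lt_of_le h (by simp only [mem_Ici] at hx; linarith)
    have h0 : (4 : ℝ) * (x + d) ^ 4 ≠ 0 := by positivity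
    have h1 : HasDerivAt (fun x : ℝ => 4 * (x + d) ^ 4)
        (4 * (((4 : ℕ) : ℝ) * (x + d) ^ (4 - 1) * 1)) x :=
      (((hasDerivAt_id x).add_const d).pow 4).const_mul 4
    have h2 := (h1.inv h0).neg
    refine h2.congr_deriv ?_
    have hne : x + d ≠ 0 := ne_of_gt hxd
    field_simp
    ring
  have hpos : ∀ x ∈ Ioi a, 0 ≤ ((x + d) ^ 5)⁻¹ := by
    intro x hx
    have hxd : 0 < x + d := lt_of_lt_of_le h (by simp only [mem_Ioi] at hx; linarith)
    positivity
  have htend : Tendsto (fun x : ℝ => -(4 * (x + d) ^ 4)⁻¹) atTop (𝓝 0) := by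
    have h1 : Tendsto (fun x : ℝ => x + d) atTop atTop :=
      tendsto_atTop_add_const_right _ d tendsto_id
    have h2 : Tendsto (fun x : ℝ => (x + d) ^ 4) atTop atTop :=
      (tendsto_pow_atTop (by norm_num)).comp h1
    have h3 : Tendsto (fun x : ℝ => 4 * (x + d) ^ 4) atTop atTop :=
      h2.const_mul_atTop (by norm_num)
    have h4 := h3.inv_tendsto_atTop
    simpa using h4.neg
  refine ⟨integrableOn_Ioi_deriv_of_nonneg' hderiv hpos htend, ?_⟩
  rw [integral_Ioi_of_hasDerivAt_of_nonneg' hderiv hpos htend]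
  simp

lemma integ3 (a d : ℝ) (h : 0 < a + d) :
    IntegrableOn (fun x => ((x + d) ^ 3)⁻¹) (Ioi a) ∧
    ∫ x in Ioi a, ((x + d) ^ 3)⁻¹ = (2 * (a + d) ^ 2)⁻¹ := by
  have hderiv : ∀ x ∈ Ici a, HasDerivAt (fun x : ℝ => -(2 * (x + d) ^ 2)⁻¹)
      (((x + d) ^ 3)⁻¹) x := by
    intro x hx
    have hxd : 0 < x + d := lt_of_lt_of_le h (by simp only [mem_Ici] at hx; linarith)
    have h0 : (2 : ℝ) * (x + d) ^ 2 ≠ 0 := by positivity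
    have h1 : HasDerivAt (fun x : ℝ => 2 * (x + d) ^ 2)
        (2 * (((2 : ℕ) : ℝ) * (x + d) ^ (2 - 1) * 1)) x :=
      (((hasDerivAt_id x).add_const d).pow 2).const_mul 2
    have h2 := (h1.inv h0).neg
    refine h2.congr_deriv ?_
    have hne : x + d ≠ 0 := ne_of_gt hxd
    field_simp
    ring
  have hpos : ∀ x ∈ Ioi a, 0 ≤ ((x + d) ^ 3)⁻¹ := by
    intro x hx
    have hxd : 0 < x + d := lt_of_lt_of_le h (by simp only [mem_Ioi] at hx; linarith)
    positivity
  have htend : Tendsto (fun x : ℝ => -(2 * (x + d) ^ 2)⁻¹) atTop (𝓝 0) := by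
    have h1 : Tendsto (fun x : ℝ => x + d) atTop atTop :=
      tendsto_atTop_add_const_right _ d tendsto_id
    have h2 : Tendsto (fun x : ℝ => (x + d) ^ 2) atTop atTop :=
      (tendsto_pow_atTop (by norm_num)).comp h1
    have h3 : Tendsto (fun x : ℝ => 2 * (x + d) ^ 2) atTop atTop :=
      h2.const_mul_atTop (by norm_num)
    have h4 := h3.inv_tendsto_atTop
    simpa using h4.neg
  refine ⟨integrableOn_Ioi_deriv_of_nonneg' hderiv hpos htend, ?_⟩
  rw [integral_Ioi_of_hasDerivAt_of_nonneg' hderiv hpos htend]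
  simp

theorem stmt7 (c : ℝ) (hc : 0 < c) :
    ((∫ z in Set.Iic (-c), sParetoPdf (z + c) * sParetoCdf z * sParetoCdf (z + c)) ≤
        sParetoCdf (-c) / 4) ∧
    ((∫ z in Set.Ioi (0 : ℝ), sParetoPdf (z + c) * sParetoCdf z * sParetoCdf (z + c)) ≤
        sParetoCdf (-c)) ∧
    sParetoCdf (-c) = 1 / (2 * (c + 1) ^ 2) := by
  set h : ℝ → ℝ := fun z => sParetoPdf (z + c) * sParetoCdf z * sParetoCdf (z + c) with hh
  have hF : sParetoCdf (-c) = 1 / (2 * (c + 1) ^ 2) := by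
    unfold sParetoCdf
    rw [if_pos (by linarith : -c < 0)]
    ring_nf
  have hhnn : ∀ z, 0 ≤ h z := fun z =>
    mul_nonneg (mul_nonneg (sParetoPdf_nonneg _) (sParetoCdf_nonneg _)) (sParetoCdf_nonneg _)
  have hhmeas : Measurable h :=
    ((measurable_sParetoPdf.comp (measurable_id.add_const c)).mul measurable_sParetoCdf).mul
      (measurable_sParetoCdf.comp (measurable_id.add_const c))
  have hc1 : (0:ℝ) < (c + 1) ^ 2 := by positivity
  refine ⟨?_, ?_, hF⟩
  · -- first bound
    have key := integral_comp_neg_Iic (-c) (fun y => h (-y))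
    simp only [neg_neg] at key
    rw [key]
    set K : ℝ := (4 * (1 + c) ^ 2)⁻¹ with hK
    have hbd : ∀ x ∈ Ioi c, h (-x) ≤ K * ((x + (1 - c)) ^ 5)⁻¹ := by
      intro x hx
      simp only [mem_Ioi] at hx
      have hx0 : 0 < x := lt_trans hc hx
      have htp : (0:ℝ) < x - c + 1 := by linarith
      have hp : sParetoPdf (-x + c) = ((x - c + 1) ^ 3)⁻¹ := by
        simp only [sParetoPdf, one_div]
        congr 1
        rw [abs_of_neg (by linarith : -x + c < 0)]
        ring
      have hc2 : sParetoCdf (-x + c) = (2 * (x - c + 1) ^ 2)⁻¹ := by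
        simp only [sParetoCdf]
        rw [if_pos (by linarith : -x + c < 0), one_div]
        congr 2
        ring
      have hc3 : sParetoCdf (-x) = (2 * (1 + x) ^ 2)⁻¹ := by
        simp only [sParetoCdf]
        rw [if_pos (by linarith : -x < 0), one_div]
        congr 2
        ring
      have e1 : h (-x) = (4 * (1 + x) ^ 2 * (x - c + 1) ^ 5)⁻¹ := by
        simp only [hh]
        rw [hp, hc3, hc2, ← mul_inv, ← mul_inv]
        congr 1
        ring
      rw [e1, hK, show x + (1 - c) = x - c + 1 from by ring, ← mul_inv]
      have hp1 : (0:ℝ) < 4 * (1 + c) ^ 2 * (x - c + 1) ^ 5 :=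
        mul_pos (by positivity) (pow_pos htp 5)
      apply inv_anti₀ hp1
      have h6 : (1 + c) ^ 2 ≤ (1 + x) ^ 2 := by nlinarith
      have h5 : (0:ℝ) < (x - c + 1) ^ 5 := pow_pos htp 5
      nlinarith
    obtain ⟨hint5, hval5⟩ := integ5 c (1 - c) (by linarith)
    have e2 : c + (1 - c) = 1 := by ring
    rw [e2] at hval5
    have hintK : IntegrableOn (fun x => K * ((x + (1 - c)) ^ 5)⁻¹) (Ioi c) :=
      hint5.const_mul K
    have hinth : IntegrableOn (fun x => h (-x)) (Ioi c) := by
      apply Integrable.mono hintK ((hhmeas.comp measurable_neg).aestronglyMeasurable)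
      filter_upwards [ae_restrict_mem measurableSet_Ioi] with x hx
      have hx0 : 0 < x := lt_trans hc hx
      have hxnn : 0 ≤ ((x + (1 - c)) ^ 5)⁻¹ := by
        have : (0:ℝ) < x + (1 - c) := by simp only [mem_Ioi] at hx; linarith
        positivity
      rw [Real.norm_eq_abs, Real.norm_eq_abs]
      simp only [Function.comp_apply]
      rw [abs_of_nonneg (hhnn _), abs_of_nonneg (mul_nonneg (by positivity) hxnn)]
      exact hbd x hx
    calc (∫ x in Ioi c, h (-x)) ≤ ∫ x in Ioi c, K * ((x + (1 - c)) ^ 5)⁻¹ :=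
          setIntegral_mono_on hinth hintK measurableSet_Ioi hbd
      _ = K * (4 * 1 ^ 4)⁻¹ := by rw [integral_const_mul, hval5]
      _ ≤ sParetoCdf (-c) / 4 := by
          rw [hF, hK]
          have h8 : ((1:ℝ) + c) ≠ 0 := by positivity
          have h9 : ((c:ℝ) + 1) ≠ 0 := by positivity
          have e4 : (4 * (1 + c) ^ 2)⁻¹ * ((4:ℝ) * 1 ^ 4)⁻¹ = 1 / (16 * (c + 1) ^ 2) := by
            field_simp
            ring
          rw [e4, div_div, div_le_div_iff₀ (by positivity) (by positivity)]
          nlinarith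
  · -- second bound
    have hbd : ∀ z ∈ Ioi (0:ℝ), h z ≤ ((z + (c + 1)) ^ 3)⁻¹ := by
      intro z hz
      simp only [mem_Ioi] at hz
      have e1 : sParetoPdf (z + c) = ((z + (c + 1)) ^ 3)⁻¹ := by
        simp only [sParetoPdf]
        rw [abs_of_pos (by linarith : (0:ℝ) < z + c), one_div]
        ring_nf
      calc h z ≤ sParetoPdf (z + c) * 1 * 1 := by
            apply mul_le_mul
            · apply mul_le_mul le_rfl (sParetoCdf_le_one _) (sParetoCdf_nonneg _)
                (sParetoPdf_nonneg _)
            · exact sParetoCdf_le_one _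
            · exact sParetoCdf_nonneg _
            · exact mul_nonneg (sParetoPdf_nonneg _) zero_le_one
        _ = ((z + (c + 1)) ^ 3)⁻¹ := by rw [e1]; ring
    obtain ⟨hint3, hval3⟩ := integ3 0 (c + 1) (by linarith)
    have hinth : IntegrableOn h (Ioi (0:ℝ)) := by
      apply Integrable.mono hint3 (hhmeas.aestronglyMeasurable)
      filter_upwards [ae_restrict_mem measurableSet_Ioi] with z hz
      have hznn : 0 ≤ ((z + (c + 1)) ^ 3)⁻¹ := by
        have : (0:ℝ) < z + (c + 1) := by simp only [mem_Ioi] at hz; linarith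
        positivity
      rw [Real.norm_eq_abs, Real.norm_eq_abs]
      rw [abs_of_nonneg (hhnn _), abs_of_nonneg hznn]
      exact hbd z hz
    calc (∫ z in Ioi (0:ℝ), h z) ≤ ∫ z in Ioi (0:ℝ), ((z + (c + 1)) ^ 3)⁻¹ :=
          setIntegral_mono_on hinth hint3 measurableSet_Ioi hbd
      _ = (2 * (0 + (c + 1)) ^ 2)⁻¹ := hval3
      _ ≤ sParetoCdf (-c) := by
          rw [hF, zero_add, one_div]
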